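/- Let I be a left ideal of ℍ[x] and F ∈ ℍ[x]. Suppose there exist N ≥ 1, polynomials G₀, …, G_N ∈ I, and G ∈ ℍ[x][y] such that G·(Fy - 1) + Σ_{m=0}^{N} G_m·y^m = 1 in ℍ[x][y]. Then F^N ∈ I + I·F + I·F² + ⋯ + I·F^N. -/

import Mathlib

open Polynomial

theorem clear_denominators (I : Ideal (Polynomial (Quaternion ℝ)))
    (F : Polynomial (Quaternion ℝ)) (N : ℕ) (hN : 1 ≤ N)
    (Gm : Fin (N + 1) → Polynomial (Quaternion ℝ)) (hGm : ∀ m, Gm m ∈ I)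
    (G : Polynomial (Polynomial (Quaternion ℝ)))
    (h : G * (Polynomial.C F * Polynomial.X - 1) +
        ∑ m : Fin (N + 1), Polynomial.C (Gm m) * Polynomial.X ^ (m : ℕ) = 1) :
    ∃ H : Fin (N + 1) → Polynomial (Quaternion ℝ), (∀ m, H m ∈ I) ∧
      F ^ N = ∑ m : Fin (N + 1), H m * F ^ (m : ℕ) := by
  by_cases hF : F = 0
  · refine ⟨0, fun m => I.zero_mem, ?_⟩
    simp [hF, zero_pow (by omega : N ≠ 0)]
  -- the coefficient function of the ideal sum
  set s : ℕ → Polynomial (Quaternion ℝ) :=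
    fun k => if hk : k < N + 1 then Gm ⟨k, hk⟩ else 0 with hs
  have hSc : ∀ k, (∑ m : Fin (N + 1),
      Polynomial.C (Gm m) * Polynomial.X ^ (m : ℕ)).coeff k = s k := by
    intro k
    rw [Polynomial.finset_sum_coeff]
    by_cases hk : k < N + 1
    · rw [Finset.sum_eq_single (⟨k, hk⟩ : Fin (N + 1))]
      · simp [hs, Polynomial.coeff_C_mul_X_pow, hk]
        intro hNk
        omega
      · intro b _ hb
        rw [Polynomial.coeff_C_mul_X_pow]
        simp only [ite_eq_right_iff]
        intro hkb
        exact absurd (Fin.ext hkb.symm) hb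
      · simp
    · have hz : ∀ b ∈ (Finset.univ : Finset (Fin (N + 1))),
          (Polynomial.C (Gm b) * Polynomial.X ^ (b : ℕ)).coeff k = 0 := by
        intro b _
        rw [Polynomial.coeff_C_mul_X_pow, if_neg]
        omega
      rw [Finset.sum_eq_zero hz, hs]
      simp [hk]
  -- coefficientwise equations
  have hc : ∀ k, (G * (Polynomial.C F * Polynomial.X - 1)).coeff k + s k
      = (1 : Polynomial (Polynomial (Quaternion ℝ))).coeff k := by
    intro k
    rw [← hSc k, ← Polynomial.coeff_add, h]
  have h0 : G.coeff 0 = s 0 - 1 := by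
    have h' := hc 0
    rw [mul_sub, mul_one, ← mul_assoc, Polynomial.coeff_sub,
      Polynomial.coeff_mul_X_zero, Polynomial.coeff_one] at h'
    simp only [if_pos rfl, zero_sub, neg_add_eq_sub] at h'
    rw [sub_eq_iff_eq_add] at h'
    rw [h']
    simp
  have hrec : ∀ k, G.coeff (k + 1) = G.coeff k * F + s (k + 1) := by
    intro k
    have h' := hc (k + 1)
    rw [mul_sub, mul_one, ← mul_assoc, Polynomial.coeff_sub,
      Polynomial.coeff_mul_X, Polynomial.coeff_mul_C,
      Polynomial.coeff_one, if_neg (by omega)] at h'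
    rw [sub_add_eq_add_sub, sub_eq_zero] at h'
    exact h'.symm
  -- G.coeff N = 0
  have htail : ∀ j, G.coeff (N + j) = G.coeff N * F ^ j := by
    intro j
    induction j with
    | zero => simp
    | succ j ih =>
      have h' := hrec (N + j)
      rw [hs] at h'
      simp only [dif_neg (by omega : ¬ (N + j + 1 < N + 1))] at h'
      rw [show N + (j + 1) = N + j + 1 by ring, h', ih, add_zero, mul_assoc,
        ← pow_succ]
  have hGN : G.coeff N = 0 := by
    have hj := htail (G.natDegree + 1)
    rw [Polynomial.coeff_eq_zero_of_natDegree_lt (by omega)] at hj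
    rcases mul_eq_zero.mp hj.symm with h' | h'
    · exact h'
    · exact absurd h' (pow_ne_zero _ hF)
  -- telescoping identity
  have key : ∀ n, n ≤ N →
      ∑ m ∈ Finset.range (n + 1), s m * F ^ (N - m)
        = F ^ N + G.coeff n * F ^ (N - n) := by
    intro n hn
    induction n with
    | zero =>
      rw [Finset.sum_range_one, Nat.sub_zero, h0, sub_mul, one_mul]
      abel
    | succ n ih =>
      have hpow : F ^ (N - n) = F * F ^ (N - (n + 1)) := by
        rw [← pow_succ']
        congr 1
        omega
      rw [Finset.sum_range_succ, ih (by omega), hrec n, hpow]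
      noncomm_ring
  have main : F ^ N = ∑ m ∈ Finset.range (N + 1), s m * F ^ (N - m) := by
    rw [key N le_rfl, hGN, zero_mul, add_zero]
  refine ⟨fun m => Gm m.rev, fun m => hGm m.rev, ?_⟩
  rw [main, ← Fin.sum_univ_eq_sum_range (fun m => s m * F ^ (N - m)) (N + 1)]
  rw [← Equiv.sum_comp (Fin.revPerm : Equiv.Perm (Fin (N + 1)))
    (fun m => s (m : ℕ) * F ^ (N - (m : ℕ)))]
  refine Finset.sum_congr rfl fun m _ => ?_
  have h1 : ((Fin.revPerm m : Fin (N + 1)) : ℕ) = N - (m : ℕ) := by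
    rw [Fin.revPerm_apply, Fin.val_rev]
    omega
  simp only [h1]
  have h2 : N - (N - (m : ℕ)) = (m : ℕ) := by
    have := m.isLt
    omega
  have h3 : s (N - (m : ℕ)) = Gm m.rev := by
    simp only [hs]
    rw [dif_pos (by omega : N - (m : ℕ) < N + 1)]
    have hrev : ((m.rev : Fin (N + 1)) : ℕ) = N - (m : ℕ) := by
      rw [Fin.val_rev]; omega
    congr 1
    simp [Fin.ext_iff, hrev]
  rw [h2, h3]
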